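/- Let M be an m × n matrix over ℤ/p^kℤ with invariant factors p^{c_1}, …, p^{c_r} where 0 ≤ c_1 ≤ … ≤ c_r < k. Then the kernel of M (as a map (ℤ/p^kℤ)^n → (ℤ/p^kℤ)^m) is isomorphic to (⊕_{i=1}^r ℤ/p^{c_i}ℤ) ⊕ (ℤ/p^kℤ)^{n−r}. -/

import Mathlib

/-- The `m × n` matrix with diagonal entries `d 0, …, d (r-1)` in the top-left
corner and zeros elsewhere (a Smith-normal-form shaped matrix). -/
def snfMat {R : Type*} [Zero R] (m n r : ℕ) (d : Fin r → R) :
    Matrix (Fin m) (Fin n) R :=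
  Matrix.of fun i j => if h : (i : ℕ) = (j : ℕ) ∧ (i : ℕ) < r then d ⟨i, h.2⟩ else 0

/-- `M` is equivalent (via invertible matrices) to the SNF-shaped matrix with
diagonal entries `d`. -/
def HasSNF {R : Type*} [CommRing R] {m n r : ℕ}
    (M : Matrix (Fin m) (Fin n) R) (d : Fin r → R) : Prop :=
  ∃ (U : Matrix (Fin m) (Fin m) R) (V : Matrix (Fin n) (Fin n) R),
    IsUnit U.det ∧ IsUnit V.det ∧ U * M * V = snfMat m n r d

section Helpers

variable {R : Type*} [CommRing R]

lemma snf_mulVec {m n r : ℕ} (hrn : r ≤ n) (d : Fin r → R) (x : Fin n → R) (i : Fin m) :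
    (snfMat m n r d).mulVec x i =
      if h : (i : ℕ) < r then d ⟨i, h⟩ * x ⟨i, lt_of_lt_of_le h hrn⟩ else 0 := by
  unfold snfMat Matrix.mulVec dotProduct
  by_cases h : (i : ℕ) < r
  · rw [dif_pos h]
    rw [Finset.sum_eq_single (⟨(i : ℕ), lt_of_lt_of_le h hrn⟩ : Fin n)]
    · simp [h]
    · intro j _ hj
      have : ¬ ((i : ℕ) = (j : ℕ) ∧ (i : ℕ) < r) := by
        rintro ⟨h1, _⟩
        exact hj (by ext; exact h1.symm)
      simp [this]
    · intro h'; exact absurd (Finset.mem_univ _) h'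
  · rw [dif_neg h]
    apply Finset.sum_eq_zero
    intro j _
    have : ¬ ((i : ℕ) = (j : ℕ) ∧ (i : ℕ) < r) := fun hc => h hc.2
    simp [this]

lemma mem_ker_snf {m n r : ℕ} (hrm : r ≤ m) (hrn : r ≤ n) (d : Fin r → R) (x : Fin n → R) :
    x ∈ LinearMap.ker (snfMat m n r d).mulVecLin ↔
      ∀ i : Fin r, d i * x ⟨i, lt_of_lt_of_le i.2 hrn⟩ = 0 := by
  rw [LinearMap.mem_ker]
  constructor
  · intro h i
    have := congrFun h ⟨(i : ℕ), lt_of_lt_of_le i.2 hrm⟩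
    rw [Matrix.mulVecLin_apply] at this
    rw [snf_mulVec hrn] at this
    simpa [i.2] using this
  · intro h
    funext i
    rw [Matrix.mulVecLin_apply, snf_mulVec hrn]
    by_cases hi : (i : ℕ) < r
    · rw [dif_pos hi]; exact h ⟨i, hi⟩
    · rw [dif_neg hi]; rfl

/-- kernel of SNF matrix splits. -/
noncomputable def kerSnfEquiv {m n r : ℕ} (hrm : r ≤ m) (hrn : r ≤ n) (d : Fin r → R) :
    LinearMap.ker (snfMat m n r d).mulVecLin ≃ₗ[R]
      ((i : Fin r) → LinearMap.ker (LinearMap.lsmul R R (d i))) × (Fin (n - r) → R) where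
  toFun x :=
    ⟨fun i => ⟨x.1 ⟨i, lt_of_lt_of_le i.2 hrn⟩, by
        rw [LinearMap.mem_ker, LinearMap.lsmul_apply, smul_eq_mul]
        exact (mem_ker_snf hrm hrn d x.1).mp x.2 i⟩,
     fun j => x.1 ⟨r + j, by omega⟩⟩
  invFun y :=
    ⟨fun j => if h : (j : ℕ) < r then (y.1 ⟨j, h⟩ : R) else y.2 ⟨(j : ℕ) - r, by omega⟩, by
      rw [mem_ker_snf hrm hrn]
      intro i
      have hi : ((⟨(i : ℕ), lt_of_lt_of_le i.2 hrn⟩ : Fin n) : ℕ) < r := i.2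
      rw [dif_pos hi]
      have := (y.1 ⟨i, i.2⟩).2
      rw [LinearMap.mem_ker, LinearMap.lsmul_apply, smul_eq_mul] at this
      convert this using 3 <;> simp⟩
  map_add' x y := by
    ext i <;> simp
  map_smul' a x := by
    ext i <;> simp
  left_inv x := by
    apply Subtype.ext
    funext j
    by_cases h : (j : ℕ) < r
    · simp only [dif_pos h]
    · simp only [dif_neg h]
      exact congrArg _ (Fin.ext (by simp only [Fin.val_mk]; omega))
  right_inv y := by
    refine Prod.ext ?_ ?_
    · funext i
      apply Subtype.ext
      have h : ((⟨(i : ℕ), lt_of_lt_of_le i.2 hrn⟩ : Fin n) : ℕ) < r := i.2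
      show dite _ _ _ = _
      rw [dif_pos h]
    · funext i
      have h : ¬ ((⟨r + (i : ℕ), by omega⟩ : Fin n) : ℕ) < r := by simp
      show dite _ _ _ = _
      rw [dif_neg h]
      exact congrArg _ (Fin.ext (by simp))

end Helpers


lemma zmod_pow_mul_eq_zero_iff {p k c : ℕ} (hp : p.Prime) (hc : c ≤ k)
    (y : ZMod (p ^ k)) :
    (p : ZMod (p ^ k)) ^ (k - c) * y = 0 ↔ ∃ z, y = (p : ZMod (p ^ k)) ^ c * z := by
  haveI : NeZero (p ^ k) := ⟨pow_ne_zero _ hp.pos.ne'⟩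
  constructor
  · intro h
    have hy : ((y.val : ℕ) : ZMod (p ^ k)) = y := ZMod.natCast_zmod_val y
    rw [← hy, ← Nat.cast_pow, ← Nat.cast_mul, ZMod.natCast_eq_zero_iff] at h
    have hpos : 0 < p ^ (k - c) := pow_pos hp.pos _
    obtain ⟨t, ht⟩ := h
    have ht2 : y.val = p ^ c * t := by
      apply Nat.eq_of_mul_eq_mul_left hpos
      rw [ht, ← mul_assoc, ← pow_add]
      congr 2
      omega
    exact ⟨t, by rw [← hy, ht2]; push_cast; ring⟩
  · rintro ⟨z, rfl⟩
    rw [← mul_assoc, ← pow_add]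
    have : k - c + c = k := by omega
    rw [this]
    have : ((p ^ k : ℕ) : ZMod (p ^ k)) = 0 := ZMod.natCast_self _
    push_cast at this
    rw [this, zero_mul]

noncomputable def coordEquiv {p k c : ℕ} (hp : p.Prime) (hc : c ≤ k) :
    (ZMod (p ^ k) ⧸ Ideal.span {(p : ZMod (p ^ k)) ^ c}) ≃ₗ[ZMod (p ^ k)]
      LinearMap.ker (LinearMap.lsmul (ZMod (p ^ k)) (ZMod (p ^ k))
        ((p : ZMod (p ^ k)) ^ c)) := by
  set R := ZMod (p ^ k)
  set g : R →ₗ[R] R := LinearMap.lsmul R R ((p : R) ^ (k - c)) with hg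
  have h1 : LinearMap.ker g = (Ideal.span {(p : R) ^ c} : Ideal R) := by
    ext y
    rw [LinearMap.mem_ker, hg, LinearMap.lsmul_apply, smul_eq_mul,
      zmod_pow_mul_eq_zero_iff hp hc, Ideal.mem_span_singleton]
    exact ⟨fun ⟨z, hz⟩ => ⟨z, hz⟩, fun ⟨z, hz⟩ => ⟨z, hz⟩⟩
  have h2 : LinearMap.range g =
      LinearMap.ker (LinearMap.lsmul R R ((p : R) ^ c)) := by
    ext y
    rw [LinearMap.mem_ker, LinearMap.lsmul_apply, smul_eq_mul, LinearMap.mem_range]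
    have hkc : k - (k - c) = c := by omega
    rw [show ((p : R) ^ c) = (p : R) ^ (k - (k - c)) by rw [hkc]]
    rw [zmod_pow_mul_eq_zero_iff hp (by omega)]
    constructor
    · rintro ⟨z, hz⟩
      exact ⟨z, by rw [← hz, hg, LinearMap.lsmul_apply, smul_eq_mul]⟩
    · rintro ⟨z, hz⟩
      exact ⟨z, by rw [hz, hg, LinearMap.lsmul_apply, smul_eq_mul]⟩
  exact (Submodule.quotEquivOfEq _ _ h1.symm).trans
    ((g.quotKerEquivRange).trans (LinearEquiv.ofEq _ _ h2))


/-- If the invariant factors of an `m × n` matrix `M` over `ℤ/p^kℤ` are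
`p^{c_1}, …, p^{c_r}` with `0 ≤ c_1 ≤ ⋯ ≤ c_r < k`, then
`ker M ≅ (⊕_{i} ℤ/p^{c_i}ℤ) ⊕ (ℤ/p^kℤ)^{n-r}`, where `ℤ/p^{c_i}ℤ` is realized
as the quotient of `ℤ/p^kℤ` by the ideal generated by `p^{c_i}`. -/
theorem kernel_iso_of_snf
    {p k m n r : ℕ} (hp : p.Prime) (hk : 1 ≤ k)
    (M : Matrix (Fin m) (Fin n) (ZMod (p ^ k)))
    (c : Fin r → ℕ) (hr : r ≤ min m n)
    (hmono : ∀ i j : Fin r, i ≤ j → c i ≤ c j) (hck : ∀ i, c i < k)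
    (hsnf : HasSNF M (fun i => (p : ZMod (p ^ k)) ^ (c i))) :
    Nonempty
      (LinearMap.ker M.mulVecLin ≃ₗ[ZMod (p ^ k)]
        (((i : Fin r) →
            ZMod (p ^ k) ⧸ Ideal.span {(p : ZMod (p ^ k)) ^ (c i)}) ×
          (Fin (n - r) → ZMod (p ^ k)))) := by
  obtain ⟨U, V, hU, hV, hUV⟩ := hsnf
  have hrm : r ≤ m := le_trans hr (min_le_left _ _)
  have hrn : r ≤ n := le_trans hr (min_le_right _ _)
  set d : Fin r → (ZMod (p ^ k)) := fun i => (p : (ZMod (p ^ k))) ^ (c i) with hd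
  haveI hUinv : Invertible U := U.invertibleOfIsUnitDet hU
  haveI hVinv : Invertible V := V.invertibleOfIsUnitDet hV
  set eV : (Fin n → (ZMod (p ^ k))) ≃ₗ[(ZMod (p ^ k))] (Fin n → (ZMod (p ^ k))) := V.toLinearEquiv' hVinv with heV
  have hcoe : (eV : (Fin n → (ZMod (p ^ k))) →ₗ[(ZMod (p ^ k))] (Fin n → (ZMod (p ^ k)))) = V.mulVecLin := by
    rw [heV]
    rw [← Matrix.toLin'_apply']
    exact V.toLinearEquiv'_apply hVinv
  have hkerU : LinearMap.ker U.mulVecLin = ⊥ := by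
    rw [LinearMap.ker_eq_bot]
    have : (U.toLinearEquiv' hUinv : (Fin m → (ZMod (p ^ k))) →ₗ[(ZMod (p ^ k))] (Fin m → (ZMod (p ^ k)))) = U.mulVecLin := by
      rw [← Matrix.toLin'_apply']; exact U.toLinearEquiv'_apply hUinv
    rw [← this]
    exact (U.toLinearEquiv' hUinv).injective
  have hker : LinearMap.ker (snfMat m n r d).mulVecLin =
      Submodule.comap (eV : (Fin n → (ZMod (p ^ k))) →ₗ[(ZMod (p ^ k))] (Fin n → (ZMod (p ^ k)))) (LinearMap.ker M.mulVecLin) := by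
    have hsplit : (snfMat m n r d).mulVecLin =
        U.mulVecLin ∘ₗ (M.mulVecLin ∘ₗ V.mulVecLin) := by
      rw [← hUV, Matrix.mulVecLin_mul, Matrix.mulVecLin_mul, LinearMap.comp_assoc]
    rw [hcoe, ← LinearMap.ker_comp, hsplit, LinearMap.ker_comp (M.mulVecLin ∘ₗ V.mulVecLin) U.mulVecLin, hkerU]
    rfl
  have e1 : LinearMap.ker M.mulVecLin ≃ₗ[(ZMod (p ^ k))] LinearMap.ker (snfMat m n r d).mulVecLin := by
    have e := (eV.symm).submoduleMap (LinearMap.ker M.mulVecLin)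
    have hmap : Submodule.map (eV.symm : (Fin n → (ZMod (p ^ k))) →ₗ[(ZMod (p ^ k))] (Fin n → (ZMod (p ^ k))))
        (LinearMap.ker M.mulVecLin) = LinearMap.ker (snfMat m n r d).mulVecLin := by
      rw [hker, ← Submodule.comap_equiv_eq_map_symm]
    exact e.trans (LinearEquiv.ofEq _ _ hmap)
  exact ⟨e1.trans ((kerSnfEquiv hrm hrn d).trans
    (LinearEquiv.prodCongr
      (LinearEquiv.piCongrRight fun i => (coordEquiv (c := c i) hp (le_of_lt (hck i))).symm)
      (LinearEquiv.refl _ _)))⟩
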